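/- If the slack variable in the QP satisfies w_i* ≤ 0 at all times for all i and each drone applies u_i* satisfying ξ₁ᵢᵀu_i* + ξ₂ᵢ ≥ w_i* (equivalently ḃ_{i,I} + a₁ b_{i,I} ≥ w_i*), and b_{i,I}(0) ≥ 0, then b_{i,I}(t) ≥ (b_{i,I}(0) + c) e^{-a₁ t} - c for any c with w_i* ≥ -a₁ c; in particular if w_i* = 0 always then I_i(t) ≥ γ/n whenever I_i(0) ≥ γ/n, and hence J̇(t) ≤ -γ. -/

import Mathlib

/-- Core comparison lemma: if f' + a₁ f ≥ -a₁ c on [0,∞), then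
(f t + c) e^{a₁ t} ≥ f 0 + c for t ≥ 0. -/
lemma comparison (a₁ c : ℝ) (f f' : ℝ → ℝ)
    (hder : ∀ t : ℝ, HasDerivAt f (f' t) t)
    (hge : ∀ t : ℝ, 0 ≤ t → f' t + a₁ * f t ≥ -(a₁ * c)) :
    ∀ t : ℝ, 0 ≤ t → f 0 + c ≤ (f t + c) * Real.exp (a₁ * t) := by
  have hf : Continuous f := by
    have : Differentiable ℝ f := fun t => (hder t).differentiableAt
    exact this.continuous
  set v : ℝ → ℝ := fun t => (f t + c) * Real.exp (a₁ * t) with hv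
  have hvder : ∀ t : ℝ, HasDerivAt v
      ((f' t + a₁ * f t + a₁ * c) * Real.exp (a₁ * t)) t := by
    intro t
    have h1 : HasDerivAt (fun t => f t + c) (f' t) t := (hder t).add_const c
    have h2 : HasDerivAt (fun t : ℝ => Real.exp (a₁ * t))
        (Real.exp (a₁ * t) * a₁) t := by
      have := (Real.hasDerivAt_exp (a₁ * t)).comp t
        ((hasDerivAt_id t).const_mul a₁)
      simpa [mul_comm, Function.comp_def] using this
    have : HasDerivAt v _ t := h1.mul h2
    convert this using 1
    ring
  have hmono : MonotoneOn v (Set.Ici (0:ℝ)) := by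
    apply monotoneOn_of_deriv_nonneg (convex_Ici 0)
    · exact Continuous.continuousOn (by fun_prop)
    · exact fun t ht => ((hvder t).differentiableAt.differentiableWithinAt)
    · intro t ht
      rw [interior_Ici] at ht
      rw [(hvder t).deriv]
      have := hge t (le_of_lt (Set.mem_Ioi.mp ht))
      have hpos : 0 ≤ f' t + a₁ * f t + a₁ * c := by linarith
      positivity
  intro t ht
  have := hmono Set.self_mem_Ici (Set.mem_Ici.mpr ht) ht
  simpa [hv] using this

/-- If each b_i = I_i - γ/n is C¹ with closed-loop constraint
ḃ_i + a₁ b_i ≥ w_i, w_i ≤ 0, b_i(0) ≥ 0, then b_i(t) ≥ (b_i(0)+c)e^{-a₁t} - c for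
any c with w_i ≥ -a₁ c; in particular if w_i ≡ 0 then I_i(t) ≥ γ/n for all t ≥ 0
and hence J̇(t) = -Σ_i I_i(t) ≤ -γ. -/
theorem stmt18 (n : ℕ) (hn : 0 < n) (γ a₁ : ℝ) (hγ : 0 < γ) (ha₁ : 0 < a₁)
    (I : Fin n → ℝ → ℝ) (b b' : Fin n → ℝ → ℝ) (w : Fin n → ℝ → ℝ)
    (hbdef : ∀ i t, b i t = I i t - γ / n)
    (hder : ∀ i, ∀ t : ℝ, HasDerivAt (b i) (b' i t) t)
    (hcont : ∀ i, Continuous (b' i))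
    (hcl : ∀ i, ∀ t : ℝ, 0 ≤ t → b' i t + a₁ * b i t ≥ w i t)
    (hw : ∀ i, ∀ t : ℝ, 0 ≤ t → w i t ≤ 0)
    (hinit : ∀ i, 0 ≤ b i 0)
    (J : ℝ → ℝ) (hJ : ∀ t : ℝ, HasDerivAt J (-(∑ i : Fin n, I i t)) t) :
    (∀ i, ∀ c : ℝ, (∀ t : ℝ, 0 ≤ t → w i t ≥ -(a₁ * c)) →
        ∀ t : ℝ, 0 ≤ t → b i t ≥ (b i 0 + c) * Real.exp (-a₁ * t) - c) ∧
      ((∀ i, ∀ t : ℝ, 0 ≤ t → w i t = 0) →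
        ∀ t : ℝ, 0 ≤ t → (∀ i, I i t ≥ γ / n) ∧ -(∑ i : Fin n, I i t) ≤ -γ) := by
  have main : ∀ i, ∀ c : ℝ, (∀ t : ℝ, 0 ≤ t → w i t ≥ -(a₁ * c)) →
      ∀ t : ℝ, 0 ≤ t → b i t ≥ (b i 0 + c) * Real.exp (-a₁ * t) - c := by
    intro i c hwc t ht
    have hge : ∀ t : ℝ, 0 ≤ t → b' i t + a₁ * b i t ≥ -(a₁ * c) := fun t ht =>
      le_trans (hwc t ht) (hcl i t ht)
    have key := comparison a₁ c (b i) (b' i) (hder i) hge t ht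
    have hexp : Real.exp (-a₁ * t) = (Real.exp (a₁ * t))⁻¹ := by
      rw [← Real.exp_neg]; ring_nf
    have hpos : 0 < Real.exp (a₁ * t) := Real.exp_pos _
    rw [ge_iff_le, sub_le_iff_le_add, hexp, mul_inv_le_iff₀ hpos]
    linarith [key]
  refine ⟨main, fun hw0 t ht => ?_⟩
  have hIi : ∀ i, I i t ≥ γ / n := by
    intro i
    have h0 : ∀ s : ℝ, 0 ≤ s → w i s ≥ -(a₁ * 0) := by
      intro s hs; rw [hw0 i s hs]; simp
    have := main i 0 h0 t ht
    have hb : b i t ≥ b i 0 * Real.exp (-a₁ * t) := by simpa using this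
    have hbt : 0 ≤ b i t := le_trans (mul_nonneg (hinit i) (Real.exp_pos _).le) hb
    have := hbdef i t
    linarith [hbt, (hbdef i t) ▸ hbt]
  refine ⟨hIi, ?_⟩
  have hsum : γ ≤ ∑ i : Fin n, I i t := by
    calc γ = ∑ _i : Fin n, γ / n := by
          rw [Finset.sum_const, Finset.card_univ, Fintype.card_fin, nsmul_eq_mul]
          field_simp
      _ ≤ ∑ i : Fin n, I i t := Finset.sum_le_sum fun i _ => hIi i
  linarith
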